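/- The sum of the absolute squares of all the coherences (indistinction-amplitudes) α_i ᾱ_{i'} of ρ(ψ) that are zeroed (decohered) by the quantum Lüders mixture operation equals the quantum logical entropy of the resulting matrix: Σ_{(i,i'): i and i' in different blocks of the index partition} |α_i ᾱ_{i'}|² = 1 − tr(ρ̂(ψ)²) = h(ρ̂(ψ)). -/

import Mathlib

open Matrix

/-- `B : ι → Finset (Fin n)` is a partition of `Fin n`: blocks are nonempty,
pairwise disjoint, and cover the whole set. -/
structure IsPartition {n : ℕ} {ι : Type*} (B : ι → Finset (Fin n)) : Prop where
  blocks_nonempty : ∀ j, (B j).Nonempty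
  blocks_disjoint : ∀ j k, j ≠ k → Disjoint (B j) (B k)
  blocks_cover : ∀ i, ∃ j, i ∈ B j

/-- The (classical) density matrix `ρ(S)` of a subset `S ⊆ U`:
entries `√(pᵢ pᵢ')/Pr(S)` when both indices are in `S`, else `0`. -/
noncomputable def rhoS {n : ℕ} (p : Fin n → ℝ) (S : Finset (Fin n)) :
    Matrix (Fin n) (Fin n) ℝ :=
  Matrix.of fun i i' =>
    if i ∈ S ∧ i' ∈ S then Real.sqrt (p i * p i') / (∑ k ∈ S, p k) else 0

/-- The diagonal 0–1 projection matrix `P_B` of a subset `B`. -/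
def projM {n : ℕ} (B : Finset (Fin n)) : Matrix (Fin n) (Fin n) ℝ :=
  Matrix.of fun i i' => if i = i' ∧ i ∈ B then 1 else 0

/-- The classical Lüders mixture operation `ρ ↦ Σ_j P_{B_j} ρ P_{B_j}`. -/
noncomputable def luders {n : ℕ} {ι : Type*} [Fintype ι] (B : ι → Finset (Fin n))
    (ρ : Matrix (Fin n) (Fin n) ℝ) : Matrix (Fin n) (Fin n) ℝ :=
  ∑ j, projM (B j) * ρ * projM (B j)

/-- The density matrix `ρ(π) = Σ_j Pr(B_j) ρ(B_j)` of a partition. -/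
noncomputable def rhoPart {n : ℕ} {ι : Type*} [Fintype ι] (p : Fin n → ℝ)
    (B : ι → Finset (Fin n)) : Matrix (Fin n) (Fin n) ℝ :=
  ∑ j, (∑ i ∈ B j, p i) • rhoS p (B j)

/-- The logical entropy `h(π) = 1 - Σ_j Pr(B_j)²` of a partition. -/
def logEntropy {n : ℕ} {ι : Type*} [Fintype ι] (p : Fin n → ℝ)
    (B : ι → Finset (Fin n)) : ℝ :=
  1 - ∑ j, (∑ i ∈ B j, p i) ^ 2

/-- The dit-set of a partition: ordered pairs lying in different blocks. -/
def ditSet {n : ℕ} {ι : Type*} (B : ι → Finset (Fin n)) : Set (Fin n × Fin n) :=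
  {q | ¬ ∃ j, q.1 ∈ B j ∧ q.2 ∈ B j}

/-- The indit-set of a partition: ordered pairs lying in the same block. -/
def inditSet {n : ℕ} {ι : Type*} (B : ι → Finset (Fin n)) : Set (Fin n × Fin n) :=
  {q | ∃ j, q.1 ∈ B j ∧ q.2 ∈ B j}

/-- The pure-state density matrix `ρ(ψ) = ψψ†` with entries `α_i ᾱ_{i'}`. -/
noncomputable def rhoPsi {n : ℕ} (ψ : Fin n → ℂ) : Matrix (Fin n) (Fin n) ℂ :=
  Matrix.of fun i i' => ψ i * star (ψ i')

/-- The diagonal 0–1 projection matrix `P_B` of a subset `B` (complex version). -/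
noncomputable def projC {n : ℕ} (B : Finset (Fin n)) : Matrix (Fin n) (Fin n) ℂ :=
  Matrix.of fun i i' => if i = i' ∧ i ∈ B then 1 else 0

/-- The quantum Lüders mixture operation `ρ ↦ Σ_j P_j ρ P_j`. -/
noncomputable def ludersC {n : ℕ} {ι : Type*} [Fintype ι] (B : ι → Finset (Fin n))
    (ρ : Matrix (Fin n) (Fin n) ℂ) : Matrix (Fin n) (Fin n) ℂ :=
  ∑ j, projC (B j) * ρ * projC (B j)

/-- The sum of the absolute squares of the coherences `α_i ᾱ_{i'}`
of `ρ(ψ)` zeroed by the quantum Lüders mixture operation equals the quantum logical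
entropy `1 - tr(ρ̂(ψ)²)` of the resulting matrix. -/
theorem stmt1 {n m : ℕ} (ψ : Fin n → ℂ) (hψ : ∑ i, ‖ψ i‖ ^ 2 = 1)
    (B : Fin m → Finset (Fin n)) (hpart : IsPartition B) :
    (↑(∑ q ∈ Finset.univ.filter
          (fun q : Fin n × Fin n => ¬ ∃ j, q.1 ∈ B j ∧ q.2 ∈ B j),
        ‖ψ q.1 * star (ψ q.2)‖ ^ 2) : ℂ)
    = 1 - Matrix.trace (ludersC B (rhoPsi ψ) * ludersC B (rhoPsi ψ)) := by
  classical
  -- entry formula for the Lüders mixture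
  have hent : ∀ i i' : Fin n, ludersC B (rhoPsi ψ) i i'
      = if ∃ j, i ∈ B j ∧ i' ∈ B j then ψ i * star (ψ i') else 0 := by
    intro i i'
    have h1 : ludersC B (rhoPsi ψ) i i'
        = ∑ j, (if i ∈ B j ∧ i' ∈ B j then ψ i * star (ψ i') else 0) := by
      unfold ludersC
      rw [Matrix.sum_apply]
      refine Finset.sum_congr rfl fun j _ => ?_
      simp only [Matrix.mul_apply, projC, rhoPsi, Matrix.of_apply, ite_and, ite_mul,
        mul_ite, zero_mul, mul_zero, Finset.sum_ite_eq, Finset.sum_ite_eq',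
        Finset.mem_univ, if_true]
      by_cases h1 : i ∈ B j <;> by_cases h2 : i' ∈ B j <;> simp [h1, h2]
    rw [h1]
    by_cases h : ∃ j, i ∈ B j ∧ i' ∈ B j
    · obtain ⟨j0, hj0⟩ := h
      rw [Finset.sum_eq_single j0]
      · rw [if_pos hj0, if_pos ⟨j0, hj0⟩]
      · intro j _ hne
        rw [if_neg]
        rintro ⟨hi, _⟩
        exact Finset.disjoint_left.1 (hpart.blocks_disjoint j j0 hne) hi hj0.1
      · simp
    · rw [if_neg h]
      refine Finset.sum_eq_zero fun j _ => if_neg fun hc => h ⟨j, hc⟩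
  -- symmetry of the indit relation
  have hsymm : ∀ i i' : Fin n, (∃ j, i ∈ B j ∧ i' ∈ B j) ↔ (∃ j, i' ∈ B j ∧ i ∈ B j) := by
    intro i i'; constructor <;> rintro ⟨j, h1, h2⟩ <;> exact ⟨j, h2, h1⟩
  -- compute the trace
  have htr : Matrix.trace (ludersC B (rhoPsi ψ) * ludersC B (rhoPsi ψ))
      = ↑(∑ q ∈ Finset.univ.filter
            (fun q : Fin n × Fin n => ∃ j, q.1 ∈ B j ∧ q.2 ∈ B j),
          ‖ψ q.1 * star (ψ q.2)‖ ^ 2) := by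
    rw [Matrix.trace, Finset.sum_filter]
    push_cast
    rw [Fintype.sum_prod_type]
    simp only [Matrix.diag_apply, Matrix.mul_apply]
    rw [Finset.sum_comm]
    refine Finset.sum_congr rfl fun i _ => Finset.sum_congr rfl fun k _ => ?_
    rw [hent, hent]
    by_cases h : ∃ j, i ∈ B j ∧ k ∈ B j
    · rw [if_pos h, if_pos ((hsymm i k).1 h), if_pos h]
      have : ψ k * star (ψ i) * (ψ i * star (ψ k))
          = (ψ i * star (ψ i)) * (ψ k * star (ψ k)) := by ring
      rw [this]
      have e1 : ψ i * star (ψ i) = (‖ψ i‖ ^ 2 : ℝ) := by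
        simp [Complex.mul_conj, Complex.normSq_eq_norm_sq]
      have e2 : ψ k * star (ψ k) = (‖ψ k‖ ^ 2 : ℝ) := by
        simp [Complex.mul_conj, Complex.normSq_eq_norm_sq]
      rw [e1, e2]
      rw [norm_mul, norm_star, mul_pow]
      push_cast
      ring
    · rw [if_neg h, if_neg fun hc => h ((hsymm i k).2 hc), if_neg h, zero_mul]
      norm_num
  rw [htr]
  -- total sum is 1
  have htot : (∑ q : Fin n × Fin n, ‖ψ q.1 * star (ψ q.2)‖ ^ 2) = 1 := by
    rw [Fintype.sum_prod_type]
    have : ∀ i k : Fin n, ‖ψ i * star (ψ k)‖ ^ 2 = ‖ψ i‖ ^ 2 * ‖ψ k‖ ^ 2 := by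
      intro i k; rw [norm_mul, norm_star, mul_pow]
    simp only [this]
    rw [← Finset.sum_mul_sum, hψ, one_mul]
  have hsplit : (∑ q ∈ Finset.univ.filter
          (fun q : Fin n × Fin n => ¬ ∃ j, q.1 ∈ B j ∧ q.2 ∈ B j),
        ‖ψ q.1 * star (ψ q.2)‖ ^ 2)
      + (∑ q ∈ Finset.univ.filter
          (fun q : Fin n × Fin n => ∃ j, q.1 ∈ B j ∧ q.2 ∈ B j),
        ‖ψ q.1 * star (ψ q.2)‖ ^ 2) = 1 := by
    rw [← htot]
    rw [add_comm, Finset.sum_filter_add_sum_filter_not]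
  have h2 : (∑ q ∈ Finset.univ.filter
          (fun q : Fin n × Fin n => ¬ ∃ j, q.1 ∈ B j ∧ q.2 ∈ B j),
        ‖ψ q.1 * star (ψ q.2)‖ ^ 2)
      = 1 - (∑ q ∈ Finset.univ.filter
          (fun q : Fin n × Fin n => ∃ j, q.1 ∈ B j ∧ q.2 ∈ B j),
        ‖ψ q.1 * star (ψ q.2)‖ ^ 2) := by linarith
  rw [h2]
  push_cast
  ring
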